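/- The category OSet of opetopic sets is cocomplete: for any small diagram D : I → OSet, the opetopic set Z with Z(k) = colim_{I} D(I)(k) computed in Set, with frames induced from representatives (well-defined because morphisms of opetopic sets preserve frames), is a colimit of D. -/

import Mathlib

open CategoryTheory

variable (𝒪 : Type) [SmallCategory 𝒪] (dim : 𝒪 → ℕ)

/-- An opetopic set over a category `𝒪` of opetopes (graded by dimension `dim`): for each
`k ≥ 0` a set of `k`-cells, each with an underlying `k`-opetope (its shape, i.e. its
frame), and for each face `g : x → shape c` of the shape of a cell `c` a cell labelling
that face (the frame data), compatibly with identities and composition. -/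
structure OpetopicSet where
  cell : ℕ → Type
  shape : ∀ {k : ℕ}, cell k → 𝒪
  dim_shape : ∀ {k : ℕ} (c : cell k), dim (shape c) = k
  face : ∀ {k : ℕ} (c : cell k) {x : 𝒪}, (x ⟶ shape c) → cell (dim x)
  shape_face : ∀ {k : ℕ} (c : cell k) {x : 𝒪} (g : x ⟶ shape c), shape (face c g) = x
  face_id : ∀ {k : ℕ} (c : cell k), HEq (face c (𝟙 (shape c))) c
  face_comp : ∀ {k : ℕ} (c : cell k) {x y : 𝒪} (g : x ⟶ shape c) (h : y ⟶ x),
    face (face c g) (h ≫ eqToHom (shape_face c g).symm) = face c (h ≫ g)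

/-- A morphism of opetopic sets: levelwise functions on cells preserving shapes and
frames (faces). -/
@[ext]
structure OpetopicSetHom (X Y : OpetopicSet 𝒪 dim) where
  app : ∀ k, X.cell k → Y.cell k
  shape_app : ∀ {k : ℕ} (c : X.cell k), Y.shape (app k c) = X.shape c
  face_app : ∀ {k : ℕ} (c : X.cell k) {x : 𝒪} (g : x ⟶ X.shape c),
    app (dim x) (X.face c g) = Y.face (app k c) (g ≫ eqToHom (shape_app c).symm)

/-- The category `OSet` of opetopic sets. -/
instance : Category (OpetopicSet 𝒪 dim) where
  Hom X Y := OpetopicSetHom 𝒪 dim X Y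
  id X :=
    { app := fun _ c => c
      shape_app := fun _ => rfl
      face_app := by intros; simp }
  comp F G :=
    { app := fun k c => G.app k (F.app k c)
      shape_app := by intro k c; rw [G.shape_app, F.shape_app]
      face_app := by
        intro k c x g
        rw [F.face_app, G.face_app]
        congr 1
        simp }
  id_comp F := rfl
  comp_id F := rfl
  assoc F G H := rfl

/-- The functor sending an opetopic set to its set of `k`-cells. -/
def cellFunctor (k : ℕ) : OpetopicSet 𝒪 dim ⥤ Type where
  obj X := X.cell k
  map F := TypeCat.ofHom (F.app k)
  map_id _ := rfl
  map_comp _ _ := rfl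

namespace OsetColim

variable {𝒪 dim}

lemma hom_ext' {X Y : OpetopicSet 𝒪 dim} {f g : OpetopicSetHom 𝒪 dim X Y}
    (h : f.app = g.app) : f = g := by
  cases f; cases g; cases h; rfl

variable {J : Type} [SmallCategory J] (F : J ⥤ OpetopicSet 𝒪 dim)

def Rel (k : ℕ) (p p' : Σ j : J, (F.obj j).cell k) : Prop :=
  ∃ f : p.1 ⟶ p'.1, p'.2 = (F.map f).app k p.2

abbrev ZCell (k : ℕ) := Quot (Rel F k)

def auxData (k : ℕ) (p : Σ j : J, (F.obj j).cell k) :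
    Σ s : 𝒪, ∀ x : 𝒪, (x ⟶ s) → ZCell F (dim x) :=
  ⟨(F.obj p.1).shape p.2, fun _ g => Quot.mk _ ⟨p.1, (F.obj p.1).face p.2 g⟩⟩

lemma sigma_helper {s s' : 𝒪} (h : s' = s)
    (f1 : ∀ x : 𝒪, (x ⟶ s) → ZCell F (dim x))
    (f2 : ∀ x : 𝒪, (x ⟶ s') → ZCell F (dim x))
    (hf : ∀ x (g : x ⟶ s'), f1 x (g ≫ eqToHom h) = f2 x g) :
    (⟨s, f1⟩ : Σ t : 𝒪, ∀ x : 𝒪, (x ⟶ t) → ZCell F (dim x)) = ⟨s', f2⟩ := by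
  subst h
  congr 1
  funext x g
  have := hf x g
  simpa using this

lemma auxData_sound (k : ℕ) (p p' : Σ j : J, (F.obj j).cell k) (h : Rel F k p p') :
    auxData F k p = auxData F k p' := by
  obtain ⟨f, hf⟩ := h
  obtain ⟨j, c⟩ := p
  obtain ⟨j', c'⟩ := p'
  dsimp at f hf
  subst hf
  apply sigma_helper F ((F.map f).shape_app c)
  intro x g
  apply Quot.sound
  refine ⟨f, ?_⟩
  dsimp
  rw [(F.map f).face_app c]
  congr 1
  simp

def colimX : OpetopicSet 𝒪 dim where
  cell k := ZCell F k
  shape {k} q := (Quot.lift (auxData F k) (auxData_sound F k) q).1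
  dim_shape {k} q := by
    induction q using Quot.ind with
    | _ p => exact (F.obj p.1).dim_shape p.2
  face {k} q := (Quot.lift (auxData F k) (auxData_sound F k) q).2 _
  shape_face {k} q := by
    induction q using Quot.ind with
    | _ p => intro x g; exact (F.obj p.1).shape_face p.2 g
  face_id {k} q := by
    induction q using Quot.ind with
    | _ p =>
      obtain ⟨j, c⟩ := p
      have hd : dim ((F.obj j).shape c) = k := (F.obj j).dim_shape c
      have h := (F.obj j).face_id c
      show HEq (Quot.mk (Rel F (dim ((F.obj j).shape c))) ⟨j, (F.obj j).face c (𝟙 _)⟩)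
        (Quot.mk (Rel F k) ⟨j, c⟩)
      revert h
      generalize (F.obj j).face c (𝟙 ((F.obj j).shape c)) = a
      revert a
      rw [hd]
      intro a h
      rw [eq_of_heq h]
  face_comp {k} q := by
    induction q using Quot.ind with
    | _ p =>
      intro x y g h
      obtain ⟨j, c⟩ := p
      show (Quot.mk (Rel F (dim y))
          ⟨j, (F.obj j).face ((F.obj j).face c g)
            (h ≫ eqToHom ((F.obj j).shape_face c g).symm)⟩ : ZCell F (dim y)) =
        Quot.mk (Rel F (dim y)) ⟨j, (F.obj j).face c (h ≫ g)⟩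
      rw [(F.obj j).face_comp c g h]

def coconeι (j : J) : F.obj j ⟶ colimX F where
  app k c := Quot.mk _ ⟨j, c⟩
  shape_app _ := rfl
  face_app {k} c x g := by
    show (Quot.mk (Rel F (dim x)) ⟨j, (F.obj j).face c g⟩ : ZCell F (dim x)) =
      Quot.mk (Rel F (dim x)) ⟨j, (F.obj j).face c (g ≫ eqToHom rfl)⟩
    congr 2
    simp

def colimCocone : Limits.Cocone F where
  pt := colimX F
  ι :=
    { app := coconeι F
      naturality := by
        intro j j' f
        apply hom_ext'
        funext k c
        exact (Quot.sound ⟨f, rfl⟩).symm }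

def descHom (s : Limits.Cocone F) : colimX F ⟶ s.pt where
  app k := Quot.lift (fun p => (s.ι.app p.1).app k p.2) (by
    rintro ⟨j, c⟩ ⟨j', c'⟩ ⟨f, hf⟩
    dsimp at f hf ⊢
    subst hf
    have h := s.ι.naturality f
    exact congrFun (congrArg (fun (t : F.obj j ⟶ s.pt) => t.app k) h.symm) c)
  shape_app {k} c := by
    induction c using Quot.ind with
    | _ p => exact (s.ι.app p.1).shape_app p.2
  face_app {k} c := by
    induction c using Quot.ind with
    | _ p =>
      intro x g
      exact (s.ι.app p.1).face_app p.2 g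

def colimIsColimit : Limits.IsColimit (colimCocone F) where
  desc := descHom F
  fac s j := by
    apply hom_ext'
    rfl
  uniq s m hm := by
    apply hom_ext'
    funext k c
    induction c using Quot.ind with
    | _ p =>
      exact congrFun (congrArg (fun (t : F.obj p.1 ⟶ s.pt) => t.app k) (hm p.1)) p.2

def typesIsColimit (k : ℕ) :
    Limits.IsColimit ((cellFunctor 𝒪 dim k).mapCocone (colimCocone F)) where
  desc s := TypeCat.ofHom (Quot.lift (fun (p : Σ j : J, (F.obj j).cell k) => s.ι.app p.1 p.2) (by
    rintro ⟨j, c⟩ ⟨j', c'⟩ ⟨f, hf⟩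
    dsimp at f hf ⊢
    subst hf
    exact (congrArg (fun t => t c) (s.ι.naturality f)).symm))
  fac s j := rfl
  uniq s m hm := by
    apply ConcreteCategory.hom_ext
    intro c
    induction c using Quot.ind with
    | _ p => exact congrArg (fun t => t p.2) (hm p.1)

end OsetColim

/-- The category `OSet` of opetopic sets is cocomplete, and colimits
are computed levelwise in `Set`: the functors taking an opetopic set to its set of
`k`-cells preserve small colimits (the frames on the levelwise colimit being induced from
representatives, which is well defined because morphisms of opetopic sets preserve
frames). -/
theorem oset_cocomplete :
    Limits.HasColimitsOfSize.{0, 0} (OpetopicSet 𝒪 dim) ∧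
      ∀ k : ℕ, Nonempty (Limits.PreservesColimitsOfSize.{0, 0} (cellFunctor 𝒪 dim k)) := by
  constructor
  · exact ⟨fun {J} _ => ⟨fun F => Limits.HasColimit.mk
      ⟨OsetColim.colimCocone F, OsetColim.colimIsColimit F⟩⟩⟩
  · intro k
    refine ⟨⟨fun {J} _ => ⟨fun {F} => ?_⟩⟩⟩
    exact Limits.preservesColimit_of_preserves_colimit_cocone
      (OsetColim.colimIsColimit F) (OsetColim.typesIsColimit F k)
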